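/- For all 1 ≤ i,j ≤ N and all m ≥ 1, the commutator [ι(F^{(0)}_{ij} ⊗ t⁰), tr 𝓕(u)ᵐ] is zero in U(L)[u], where L = 𝔤_ℓ ⊗_ℂ ℂ[t,t⁻¹] is the loop algebra of the Takiff algebra; that is, tr 𝓕(u)ᵐ commutes with the degree-(0,0) copy of 𝔤 in U(L). (Intermediate claim in the proof of Proposition 4.1, formulated in the loop algebra where no central term arises.) -/

import Mathlib

/- Context: 𝔤 simple finite-dimensional over ℂ, dual bases Jup, Jlo w.r.t. a nondegenerate
symmetric invariant form B, ρ faithful on ℂᴺ, f_{ij} = −∑ₐ (ρ(Jᵃ))_{ij}·J_a;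
𝔤_ℓ = 𝔤 ⊗ ℂ[v]/(v^{ℓ+1}); L = 𝔤_ℓ ⊗ ℂ[t,t⁻¹] the loop algebra (modeled as
ℂ[t,t⁻¹] ⊗ 𝔤_ℓ), X[p] = X ⊗ tᵖ; 𝓕(u) the N×N matrix over U(L)[u] with entries
∑_{r=0}^ℓ ι(F^{(r)}_{ij}[−1])·uʳ. -/

open TensorProduct

attribute [local instance 100] LieRing.ofAssociativeRing

/-- The truncated polynomial ring `ℂ[v]/(v^{ℓ+1})`. -/
abbrev TruncPoly (ℓ : ℕ) : Type :=
  Polynomial ℂ ⧸ Ideal.span {(Polynomial.X : Polynomial ℂ) ^ (ℓ + 1)}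

/-- The image of `vʳ` in `ℂ[v]/(v^{ℓ+1})`. -/
noncomputable def vpow (ℓ r : ℕ) : TruncPoly ℓ :=
  Ideal.Quotient.mk _ (Polynomial.X ^ r)

/-- A base-changed Lie algebra is also a Lie algebra over the base field. -/
noncomputable instance instLieAlgebraCBaseChange {g : Type} [LieRing g] [LieAlgebra ℂ g]
    {A : Type} [CommRing A] [Algebra ℂ A] : LieAlgebra ℂ (A ⊗[ℂ] g) where
  lie_smul t x y := by
    rw [← algebraMap_smul A t y, ← algebraMap_smul A t ⁅x, y⁆]
    exact (LieAlgebra.ExtendScalars.instLieAlgebra ℂ A g).lie_smul _ x y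

/-- The element `f_{ij} = −∑ₐ (ρ(Jᵃ))_{ij}·J_a ∈ 𝔤`. -/
noncomputable def fElem {d N : ℕ} {g : Type} [LieRing g] [LieAlgebra ℂ g]
    (ρ : g →ₗ⁅ℂ⁆ Matrix (Fin N) (Fin N) ℂ)
    (Jup Jlo : Module.Basis (Fin d) ℂ g) (i j : Fin N) : g :=
  -(∑ a : Fin d, (ρ (Jup a)) i j • Jlo a)

/-- The loop algebra `L = ℂ[t,t⁻¹] ⊗ 𝔤_ℓ` of the Takiff algebra `𝔤_ℓ`. -/
abbrev LoopTakiff (ℓ : ℕ) (g : Type) [LieRing g] [LieAlgebra ℂ g] : Type :=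
  LaurentPolynomial ℂ ⊗[ℂ] (TruncPoly ℓ ⊗[ℂ] g)

noncomputable instance instLieRingLoopTakiff (ℓ : ℕ) {g : Type} [LieRing g]
    [LieAlgebra ℂ g] : LieRing (LoopTakiff ℓ g) :=
  LieAlgebra.ExtendScalars.instLieRing ℂ (LaurentPolynomial ℂ) (TruncPoly ℓ ⊗[ℂ] g)

noncomputable instance instLieAlgebraLoopTakiff (ℓ : ℕ) {g : Type} [LieRing g]
    [LieAlgebra ℂ g] : LieAlgebra ℂ (LoopTakiff ℓ g) :=
  instLieAlgebraCBaseChange (g := TruncPoly ℓ ⊗[ℂ] g) (A := LaurentPolynomial ℂ)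

/-- The element `F^{(r)}_{ij}[p] = (f_{ij} ⊗ vʳ) ⊗ tᵖ` of the loop algebra. -/
noncomputable def loopF {d N : ℕ} {g : Type} [LieRing g] [LieAlgebra ℂ g]
    (ρ : g →ₗ⁅ℂ⁆ Matrix (Fin N) (Fin N) ℂ) (Jup Jlo : Module.Basis (Fin d) ℂ g)
    (ℓ r : ℕ) (p : ℤ) (i j : Fin N) : LoopTakiff ℓ g :=
  LaurentPolynomial.T p ⊗ₜ (vpow ℓ r ⊗ₜ fElem ρ Jup Jlo i j)

/-- The matrix `𝓕(u)` over `U(L)[u]` with entries `∑_{r=0}^ℓ ι(F^{(r)}_{ij}[−1])·uʳ`. -/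
noncomputable def loopFMat {d N : ℕ} {g : Type} [LieRing g] [LieAlgebra ℂ g]
    (ρ : g →ₗ⁅ℂ⁆ Matrix (Fin N) (Fin N) ℂ) (Jup Jlo : Module.Basis (Fin d) ℂ g) (ℓ : ℕ) :
    Matrix (Fin N) (Fin N)
      (Polynomial (UniversalEnvelopingAlgebra ℂ (LoopTakiff ℓ g))) :=
  Matrix.of fun i j => ∑ r : Fin (ℓ + 1),
    Polynomial.C (UniversalEnvelopingAlgebra.ι ℂ (loopF ρ Jup Jlo ℓ (r : ℕ) (-1) i j)) *
      Polynomial.X ^ (r : ℕ)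


section Aux

variable {d N : ℕ} {g : Type} [LieRing g] [LieAlgebra ℂ g]
  (B : g →ₗ[ℂ] g →ₗ[ℂ] ℂ)
  (Jup Jlo : Module.Basis (Fin d) ℂ g)

lemma expand_up (hdual : ∀ a b, B (Jlo a) (Jup b) = if a = b then 1 else 0)
    (z : g) : ∑ a : Fin d, (B (Jlo a)) z • Jup a = z := by
  have h : (∑ a : Fin d, LinearMap.smulRight (B (Jlo a)) (Jup a)) = LinearMap.id := by
    apply Jup.ext
    intro b
    simp [LinearMap.sum_apply, hdual, ite_smul]
  simpa using LinearMap.congr_fun h z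

lemma expand_lo (hdual : ∀ a b, B (Jlo a) (Jup b) = if a = b then 1 else 0)
    (z : g) : ∑ c : Fin d, B z (Jup c) • Jlo c = z := by
  have h : (∑ c : Fin d, LinearMap.smulRight (B.flip (Jup c)) (Jlo c)) = LinearMap.id := by
    apply Jlo.ext
    intro b
    simp [LinearMap.sum_apply, hdual, ite_smul]
  simpa using LinearMap.congr_fun h z

variable (ρ : g →ₗ⁅ℂ⁆ Matrix (Fin N) (Fin N) ℂ)

lemma entry_sum (hdual : ∀ a b, B (Jlo a) (Jup b) = if a = b then 1 else 0)
    (z : g) (k l : Fin N) :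
    ∑ a : Fin d, (B (Jlo a)) z * (ρ (Jup a)) k l = (ρ z) k l := by
  have := congrArg (fun w => (ρ.toLinearMap w) k l) (expand_up B Jup Jlo hdual z)
  simpa [map_sum, map_smul, Matrix.sum_apply, Matrix.smul_apply, smul_eq_mul] using this

lemma key_g (hBinv : ∀ x y z, B ⁅x, y⁆ z = B x ⁅y, z⁆)
    (hdual : ∀ a b, B (Jlo a) (Jup b) = if a = b then 1 else 0)
    (x : g) (k l : Fin N) :
    ⁅x, fElem ρ Jup Jlo k l⁆ =
      ∑ s : Fin N, (ρ x) s l • fElem ρ Jup Jlo k s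
        - ∑ s : Fin N, (ρ x) k s • fElem ρ Jup Jlo s l := by
  have lie_sum' : ∀ {ι : Type} [Fintype ι] (f : ι → g),
      ⁅x, ∑ a, f a⁆ = ∑ a, ⁅x, f a⁆ := by
    intro ι _ f
    exact map_sum (AddMonoidHom.mk' (fun y => ⁅x, y⁆) (lie_add x)) f Finset.univ
  have hbr : ∀ a : Fin d, ⁅x, Jlo a⁆
      = ∑ c : Fin d, (-(B (Jlo a)) ⁅x, Jup c⁆) • Jlo c := by
    intro a
    have hc : ∀ c : Fin d, B ⁅x, Jlo a⁆ (Jup c) = -(B (Jlo a)) ⁅x, Jup c⁆ := by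
      intro c
      rw [← lie_skew, map_neg, LinearMap.neg_apply, hBinv]
    rw [← expand_lo B Jup Jlo hdual ⁅x, Jlo a⁆]
    exact Finset.sum_congr rfl fun c _ => by rw [hc]
  have hmat : ∀ c : Fin d, (ρ ⁅x, Jup c⁆) k l
      = ∑ s : Fin N, (ρ x) k s * (ρ (Jup c)) s l
        - ∑ s : Fin N, (ρ x) s l * (ρ (Jup c)) k s := by
    intro c
    rw [LieHom.map_lie, Ring.lie_def, Matrix.sub_apply, Matrix.mul_apply, Matrix.mul_apply]
    congr 1
    exact Finset.sum_congr rfl fun s _ => by rw [mul_comm]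
  -- LHS expansion
  have lhs_eq : ⁅x, fElem ρ Jup Jlo k l⁆
      = ∑ c : Fin d, (ρ ⁅x, Jup c⁆) k l • Jlo c := by
    rw [show fElem ρ Jup Jlo k l = -(∑ a : Fin d, (ρ (Jup a)) k l • Jlo a) from rfl]
    rw [lie_neg, lie_sum']
    simp only [lie_smul]
    simp only [hbr, Finset.smul_sum, smul_smul]
    rw [Finset.sum_comm, ← Finset.sum_neg_distrib]
    refine Finset.sum_congr rfl fun c _ => ?_
    simp only [mul_neg, neg_smul, neg_neg, Finset.sum_neg_distrib]
    rw [← Finset.sum_smul]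
    congr 1
    rw [← entry_sum B Jup Jlo ρ hdual ⁅x, Jup c⁆ k l]
    exact Finset.sum_congr rfl fun a _ => by ring
  -- RHS expansion
  have hf : ∀ p q : Fin N, fElem ρ Jup Jlo p q
      = -(∑ c : Fin d, (ρ (Jup c)) p q • Jlo c) := fun _ _ => rfl
  have rhs_eq : (∑ s : Fin N, (ρ x) s l • fElem ρ Jup Jlo k s
        - ∑ s : Fin N, (ρ x) k s • fElem ρ Jup Jlo s l)
      = ∑ c : Fin d, (ρ ⁅x, Jup c⁆) k l • Jlo c := by
    simp only [hf, smul_neg, Finset.smul_sum, smul_smul]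
    simp only [Finset.sum_neg_distrib, neg_sub_neg]
    rw [Finset.sum_comm (γ := Fin N), Finset.sum_comm (γ := Fin N),
      ← Finset.sum_sub_distrib]
    refine Finset.sum_congr rfl fun c _ => ?_
    rw [← Finset.sum_smul, ← Finset.sum_smul, ← sub_smul, hmat c]
  rw [lhs_eq, rhs_eq]

set_option maxHeartbeats 2000000 in
lemma my_bracket_tmul (ℓ : ℕ) (s t : LaurentPolynomial ℂ) (x y : TruncPoly ℓ ⊗[ℂ] g) :
    ⁅s ⊗ₜ[ℂ] x, t ⊗ₜ[ℂ] y⁆ = (s * t) ⊗ₜ[ℂ] ⁅x, y⁆ := rfl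

set_option maxHeartbeats 2000000 in
lemma my_bracket_tmul2 (ℓ : ℕ) (s t : TruncPoly ℓ) (x y : g) :
    ⁅s ⊗ₜ[ℂ] x, t ⊗ₜ[ℂ] y⁆ = (s * t) ⊗ₜ[ℂ] ⁅x, y⁆ := rfl

set_option maxHeartbeats 1600000 in
lemma key_loop (hBinv : ∀ x y z, B ⁅x, y⁆ z = B x ⁅y, z⁆)
    (hdual : ∀ a b, B (Jlo a) (Jup b) = if a = b then 1 else 0)
    (ℓ r : ℕ) (p : ℤ) (i j k l : Fin N) :
    ⁅loopF ρ Jup Jlo ℓ 0 0 i j, loopF ρ Jup Jlo ℓ r p k l⁆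
      = ∑ s : Fin N, (ρ (fElem ρ Jup Jlo i j)) s l • loopF ρ Jup Jlo ℓ r p k s
        - ∑ s : Fin N, (ρ (fElem ρ Jup Jlo i j)) k s • loopF ρ Jup Jlo ℓ r p s l := by
  have h0 : (vpow ℓ 0 : TruncPoly ℓ) = 1 := by
    simp [vpow]
  unfold loopF
  rw [my_bracket_tmul, my_bracket_tmul2]
  rw [key_g B Jup Jlo ρ hBinv hdual, h0, one_mul, ← LaurentPolynomial.T_add, zero_add]
  simp only [tmul_sub, tmul_sum, tmul_smul]

lemma trace_comm_aux {n : ℕ} {R : Type} [Ring R] (x : R) (F A' : Matrix (Fin n) (Fin n) R)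
    (hcentral : ∀ k l (p : R), A' k l * p = p * A' k l)
    (hbase : ∀ k l, x * F k l - F k l * x = (F * A' - A' * F) k l) (m : ℕ) :
    x * Matrix.trace (F ^ m) - Matrix.trace (F ^ m) * x = 0 := by
  set X0M : Matrix (Fin n) (Fin n) R := x • (1 : Matrix (Fin n) (Fin n) R) with hX0M
  have hl : ∀ (M : Matrix (Fin n) (Fin n) R) (k l : Fin n), (X0M * M) k l = x * M k l := by
    intro M k l
    rw [hX0M, Matrix.smul_mul, Matrix.one_mul, Matrix.smul_apply, smul_eq_mul]
  have hr : ∀ (M : Matrix (Fin n) (Fin n) R) (k l : Fin n), (M * X0M) k l = M k l * x := by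
    intro M k l
    rw [hX0M]
    simp [Matrix.mul_apply, Matrix.one_apply, mul_ite, mul_one, mul_zero,
      Finset.sum_ite_eq']
  have hbaseM : X0M * F - F * X0M = F * A' - A' * F := by
    ext k l
    rw [Matrix.sub_apply, hl, hr]
    exact hbase k l
  have h1 : X0M * F = F * X0M + (F * A' - A' * F) := by
    rw [← hbaseM]; noncomm_ring
  have hpowM : ∀ m : ℕ, X0M * F ^ m - F ^ m * X0M = F ^ m * A' - A' * F ^ m := by
    intro m
    induction m with
    | zero => simp
    | succ n ih =>
      have h2 : X0M * F ^ n = F ^ n * X0M + (F ^ n * A' - A' * F ^ n) := by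
        rw [← ih]; noncomm_ring
      have e : X0M * (F ^ n * F) = (F ^ n * F) * X0M
          + (F ^ n * (F * A' - A' * F) + (F ^ n * A' - A' * F ^ n) * F) := by
        calc X0M * (F ^ n * F) = (X0M * F ^ n) * F := by rw [mul_assoc]
          _ = (F ^ n * X0M + (F ^ n * A' - A' * F ^ n)) * F := by rw [h2]
          _ = F ^ n * (X0M * F) + (F ^ n * A' - A' * F ^ n) * F := by noncomm_ring
          _ = F ^ n * (F * X0M + (F * A' - A' * F)) + (F ^ n * A' - A' * F ^ n) * F := by
              rw [h1]
          _ = (F ^ n * F) * X0M + (F ^ n * (F * A' - A' * F) + (F ^ n * A' - A' * F ^ n) * F) := by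
              noncomm_ring
      rw [pow_succ, e]
      noncomm_ring
  have htrL : x * Matrix.trace (F ^ m) - Matrix.trace (F ^ m) * x
      = Matrix.trace (X0M * F ^ m - F ^ m * X0M) := by
    rw [Matrix.trace_sub]
    unfold Matrix.trace
    simp only [Matrix.diag_apply, hl, hr]
    rw [Finset.mul_sum, Finset.sum_mul]
  have htrR : Matrix.trace (F ^ m * A' - A' * F ^ m) = 0 := by
    rw [Matrix.trace_sub, sub_eq_zero]
    unfold Matrix.trace
    simp only [Matrix.diag_apply, Matrix.mul_apply]
    rw [Finset.sum_comm]
    exact Finset.sum_congr rfl fun k _ => Finset.sum_congr rfl fun s _ =>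
      (hcentral k s ((F ^ m) s k)).symm
  rw [htrL, hpowM, htrR]

set_option maxHeartbeats 1600000 in
set_option synthInstance.maxHeartbeats 400000 in
lemma entry_comm (hBinv : ∀ x y z, B ⁅x, y⁆ z = B x ⁅y, z⁆)
    (hdual : ∀ a b, B (Jlo a) (Jup b) = if a = b then 1 else 0)
    (ℓ : ℕ) (i j k l : Fin N) :
    Polynomial.C (UniversalEnvelopingAlgebra.ι ℂ (loopF ρ Jup Jlo ℓ 0 0 i j))
        * loopFMat ρ Jup Jlo ℓ k l
      - loopFMat ρ Jup Jlo ℓ k l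
        * Polynomial.C (UniversalEnvelopingAlgebra.ι ℂ (loopF ρ Jup Jlo ℓ 0 0 i j))
    = (loopFMat ρ Jup Jlo ℓ
          * ((ρ (fElem ρ Jup Jlo i j)).map
              (algebraMap ℂ (Polynomial (UniversalEnvelopingAlgebra ℂ (LoopTakiff ℓ g)))))
        - ((ρ (fElem ρ Jup Jlo i j)).map
              (algebraMap ℂ (Polynomial (UniversalEnvelopingAlgebra ℂ (LoopTakiff ℓ g)))))
          * loopFMat ρ Jup Jlo ℓ) k l := by
  have hc1 : ∀ (c : ℂ) (p : Polynomial (UniversalEnvelopingAlgebra ℂ (LoopTakiff ℓ g))),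
      p * algebraMap ℂ _ c = c • p := by
    intro c p
    rw [Algebra.smul_def, Algebra.commutes]
  have hc2 : ∀ (c : ℂ) (p : Polynomial (UniversalEnvelopingAlgebra ℂ (LoopTakiff ℓ g))),
      algebraMap ℂ _ c * p = c • p := fun c p => (Algebra.smul_def c p).symm
  have hFapp : ∀ p q : Fin N, loopFMat ρ Jup Jlo ℓ p q
      = ∑ r : Fin (ℓ + 1),
          Polynomial.C (UniversalEnvelopingAlgebra.ι ℂ (loopF ρ Jup Jlo ℓ (r : ℕ) (-1) p q))
            * Polynomial.X ^ (r : ℕ) := fun _ _ => rfl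
  have hterm : ∀ r : Fin (ℓ + 1),
      Polynomial.C (UniversalEnvelopingAlgebra.ι ℂ (loopF ρ Jup Jlo ℓ 0 0 i j))
          * (Polynomial.C (UniversalEnvelopingAlgebra.ι ℂ (loopF ρ Jup Jlo ℓ (r : ℕ) (-1) k l))
              * Polynomial.X ^ (r : ℕ))
        - Polynomial.C (UniversalEnvelopingAlgebra.ι ℂ (loopF ρ Jup Jlo ℓ (r : ℕ) (-1) k l))
            * Polynomial.X ^ (r : ℕ)
            * Polynomial.C (UniversalEnvelopingAlgebra.ι ℂ (loopF ρ Jup Jlo ℓ 0 0 i j))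
      = ∑ s : Fin N,
          Polynomial.C (UniversalEnvelopingAlgebra.ι ℂ (loopF ρ Jup Jlo ℓ (r : ℕ) (-1) k s))
            * Polynomial.X ^ (r : ℕ)
            * algebraMap ℂ _ ((ρ (fElem ρ Jup Jlo i j)) s l)
        - ∑ s : Fin N,
            algebraMap ℂ _ ((ρ (fElem ρ Jup Jlo i j)) k s)
              * (Polynomial.C (UniversalEnvelopingAlgebra.ι ℂ (loopF ρ Jup Jlo ℓ (r : ℕ) (-1) s l))
                  * Polynomial.X ^ (r : ℕ)) := by
    intro r
    rw [← mul_assoc,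
      mul_assoc _ _ (Polynomial.C (UniversalEnvelopingAlgebra.ι ℂ (loopF ρ Jup Jlo ℓ 0 0 i j))),
      Polynomial.X_pow_mul
        (p := Polynomial.C (UniversalEnvelopingAlgebra.ι ℂ (loopF ρ Jup Jlo ℓ 0 0 i j))),
      ← mul_assoc, ← sub_mul, ← Polynomial.C_mul, ← Polynomial.C_mul, ← Polynomial.C_sub]
    have hlie : UniversalEnvelopingAlgebra.ι ℂ (loopF ρ Jup Jlo ℓ 0 0 i j)
          * UniversalEnvelopingAlgebra.ι ℂ (loopF ρ Jup Jlo ℓ (r : ℕ) (-1) k l)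
        - UniversalEnvelopingAlgebra.ι ℂ (loopF ρ Jup Jlo ℓ (r : ℕ) (-1) k l)
          * UniversalEnvelopingAlgebra.ι ℂ (loopF ρ Jup Jlo ℓ 0 0 i j)
        = UniversalEnvelopingAlgebra.ι ℂ ⁅loopF ρ Jup Jlo ℓ 0 0 i j,
            loopF ρ Jup Jlo ℓ (r : ℕ) (-1) k l⁆ := by
      rw [LieHom.map_lie, Ring.lie_def]
    rw [hlie, key_loop B Jup Jlo ρ hBinv hdual]
    have hsum : ∀ (f : Fin N → LoopTakiff ℓ g),
        UniversalEnvelopingAlgebra.ι ℂ (∑ s : Fin N, f s)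
          = ∑ s : Fin N, UniversalEnvelopingAlgebra.ι ℂ (f s) := by
      intro f
      rw [← LieHom.coe_toLinearMap]
      exact map_sum _ _ _
    simp only [map_sub, hsum, map_smul, map_sum]
    simp only [← Polynomial.smul_C]
    rw [sub_mul, Finset.sum_mul, Finset.sum_mul]
    simp only [smul_mul_assoc, hc1, hc2]
  rw [Matrix.sub_apply, Matrix.mul_apply, Matrix.mul_apply]
  simp only [hFapp, Matrix.map_apply]
  rw [Finset.mul_sum, Finset.sum_mul, ← Finset.sum_sub_distrib]
  simp only [Finset.sum_mul, Finset.mul_sum]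
  simp only [hterm]
  rw [Finset.sum_sub_distrib]
  congr 1 <;> exact Finset.sum_comm

end Aux

/-- for `m ≥ 1` the commutator `[ι(F^{(0)}_{ij} ⊗ t⁰), tr 𝓕(u)ᵐ]` vanishes
in `U(L)[u]`, where `L` is the loop algebra of the Takiff algebra `𝔤_ℓ`. -/
theorem loop_takiff_commutator_degree_zero
    {d N : ℕ} {g : Type} [LieRing g] [LieAlgebra ℂ g]
    [FiniteDimensional ℂ g] [LieAlgebra.IsSimple ℂ g]
    (B : g →ₗ[ℂ] g →ₗ[ℂ] ℂ)
    (hBsymm : ∀ x y, B x y = B y x)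
    (hBinv : ∀ x y z, B ⁅x, y⁆ z = B x ⁅y, z⁆)
    (hBnondeg : ∀ x, (∀ y, B x y = 0) → x = 0)
    (Jup Jlo : Module.Basis (Fin d) ℂ g)
    (hdual : ∀ a b, B (Jlo a) (Jup b) = if a = b then 1 else 0)
    (ρ : g →ₗ⁅ℂ⁆ Matrix (Fin N) (Fin N) ℂ)
    (hρ : Function.Injective ρ)
    (ℓ : ℕ) (hℓ : 1 ≤ ℓ)
    (i j : Fin N) (m : ℕ) (hm : 1 ≤ m) :
    ⁅(Polynomial.C (UniversalEnvelopingAlgebra.ι ℂ (loopF ρ Jup Jlo ℓ 0 0 i j)) :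
        Polynomial (UniversalEnvelopingAlgebra ℂ (LoopTakiff ℓ g))),
      (((loopFMat ρ Jup Jlo ℓ) ^ m).trace)⁆ = 0 := by
  rw [Ring.lie_def]
  have hcentral : ∀ (k l : Fin N)
      (p : Polynomial (UniversalEnvelopingAlgebra ℂ (LoopTakiff ℓ g))),
      ((ρ (fElem ρ Jup Jlo i j)).map
          (algebraMap ℂ (Polynomial (UniversalEnvelopingAlgebra ℂ (LoopTakiff ℓ g))))) k l * p
        = p * ((ρ (fElem ρ Jup Jlo i j)).map
          (algebraMap ℂ (Polynomial (UniversalEnvelopingAlgebra ℂ (LoopTakiff ℓ g))))) k l := by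
    intro k l p
    rw [Matrix.map_apply]
    exact Algebra.commutes _ _
  exact trace_comm_aux _ _ _ hcentral
    (fun k l => entry_comm B Jup Jlo ρ hBinv hdual ℓ i j k l) m
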